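/- For an index set A = {a_1 < a_2 < ... < a_k} ⊆ {0,1,...,n−1}, the Schur polynomial s_A(x_1,...,x_k) = det((x_j^{a_i})_{i,j}) / ∏_{1≤i<j≤k}(x_j − x_i) has nonnegative integer coefficients. -/

import Mathlib

open MvPolynomial

open Finset

variable {R : Type*} [CommRing R]

lemma geom_helper (x t : R) (p q : ℕ) (hpq : p ≤ q) :
    (∑ u ∈ Finset.range (q - p), (t - x) * (t ^ (q - p - 1 - u) * x ^ (p + u)))
      = x ^ p * t ^ (q - p) - x ^ q := by
  have key : ∀ u, (t - x) * (t ^ (q - p - 1 - u) * x ^ (p + u))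
      = x ^ p * ((x ^ u * t ^ (q - p - 1 - u)) * (t - x)) := by
    intro u; rw [pow_add]; ring
  rw [Finset.sum_congr rfl (fun u _ => key u), ← Finset.mul_sum, ← Finset.sum_mul]
  have h2 : (∑ i ∈ range (q - p), x ^ i * t ^ (q - p - 1 - i)) * (t - x)
      = t ^ (q - p) - x ^ (q - p) := by
    linear_combination -geom_sum₂_mul x t (q - p)
  rw [h2, mul_sub, ← pow_add, Nat.add_sub_cancel' hpq]

lemma det_rowsum {k : ℕ} (x : Fin k → R) (t : R) (p q : Fin k → ℕ) (hpq : ∀ i, p i ≤ q i) :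
    Matrix.det (fun i j : Fin k => x j ^ p i * t ^ (q i - p i) - x j ^ q i)
      = (∏ j : Fin k, (t - x j)) *
        ∑ d ∈ Fintype.piFinset (fun i : Fin k => Finset.range (q i - p i)),
          (∏ i : Fin k, t ^ (q i - p i - 1 - d i)) *
            Matrix.det (fun i j : Fin k => x j ^ (p i + d i)) := by
  have step1 : (fun i j : Fin k => x j ^ p i * t ^ (q i - p i) - x j ^ q i)
      = fun i => ∑ u ∈ Finset.range (q i - p i),
          (fun j => (t - x j) * (t ^ (q i - p i - 1 - u) * x j ^ (p i + u))) := by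
    funext i j
    rw [Finset.sum_apply]
    exact (geom_helper (x j) t (p i) (q i) (hpq i)).symm
  have step2 := (Matrix.detRowAlternating (R := R) (n := Fin k)).toMultilinearMap.map_sum_finset
    (fun i u => (fun j => (t - x j) * (t ^ (q i - p i - 1 - u) * x j ^ (p i + u))))
    (fun i => Finset.range (q i - p i))
  have hdet : Matrix.det (fun i j : Fin k => x j ^ p i * t ^ (q i - p i) - x j ^ q i)
      = ∑ d ∈ Fintype.piFinset (fun i : Fin k => Finset.range (q i - p i)),
          Matrix.det (fun i j : Fin k =>
            (t - x j) * (t ^ (q i - p i - 1 - d i) * x j ^ (p i + d i))) := by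
    rw [step1]
    exact step2
  rw [hdet, Finset.mul_sum]
  apply Finset.sum_congr rfl
  intro d _
  have e1 : Matrix.det (fun i j : Fin k =>
        (t - x j) * (t ^ (q i - p i - 1 - d i) * x j ^ (p i + d i)))
      = (∏ j : Fin k, (t - x j)) *
          Matrix.det (Matrix.of fun i j : Fin k => t ^ (q i - p i - 1 - d i) * x j ^ (p i + d i)) :=
    Matrix.det_mul_row (fun j => t - x j) _
  have e2 : Matrix.det (Matrix.of fun i j : Fin k => t ^ (q i - p i - 1 - d i) * x j ^ (p i + d i))
      = (∏ i : Fin k, t ^ (q i - p i - 1 - d i)) *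
          Matrix.det (Matrix.of fun i j : Fin k => x j ^ (p i + d i)) :=
    Matrix.det_mul_column (fun i => t ^ (q i - p i - 1 - d i)) _
  rw [e1, e2]
  ring_nf
  rfl

lemma card_filter_lt {k : ℕ} (N : ℕ) (hN : N ≤ k) :
    #(Finset.univ.filter fun j : Fin k => (j : ℕ) < N) = N := by
  have h2 := Finset.card_bij' (s := Finset.univ.filter fun j : Fin k => (j : ℕ) < N)
    (t := (Finset.univ : Finset (Fin N)))
    (i := fun j hj => (⟨(j : ℕ), by simpa using hj⟩ : Fin N))
    (j := fun v _ => (⟨(v : ℕ), lt_of_lt_of_le v.2 hN⟩ : Fin k))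
    (fun a ha => Finset.mem_univ _) (fun b hb => by simp [b.2]) (fun a ha => rfl)
    (fun b hb => rfl)
  simpa using h2

lemma mono_of_adj {k : ℕ} (c : Fin k → ℕ)
    (h : ∀ (r : Fin k) (hr : (r : ℕ) + 1 < k), c r ≤ c ⟨(r : ℕ) + 1, hr⟩) :
    ∀ i j : Fin k, i ≤ j → c i ≤ c j := by
  have key : ∀ (n : ℕ) (i j : Fin k), (j : ℕ) = (i : ℕ) + n → c i ≤ c j := by
    intro n
    induction n with
    | zero => intro i j hij; have : i = j := Fin.ext (by omega); rw [this]
    | succ n ih =>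
      intro i j hij
      have hlt : (i : ℕ) + n < k := by have := j.isLt; omega
      have h1 := ih i ⟨(i : ℕ) + n, hlt⟩ rfl
      have hr : ((⟨(i : ℕ) + n, hlt⟩ : Fin k) : ℕ) + 1 < k := by show (i : ℕ) + n + 1 < k; have := j.isLt; omega
      have h2 := h ⟨(i : ℕ) + n, hlt⟩ hr
      have : (⟨((⟨(i : ℕ) + n, hlt⟩ : Fin k) : ℕ) + 1, hr⟩ : Fin k) = j := Fin.ext (by show ((i : ℕ) + n) + 1 = (j : ℕ); omega)
      rw [this] at h2
      exact h1.trans h2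
  intro i j hij
  exact key ((j : ℕ) - (i : ℕ)) i j (by have := Fin.le_def.mp hij; omega)

lemma det_expand_last {k : ℕ} (x : Fin (k + 1) → R) (a : Fin (k + 1) → ℕ) (ha : Monotone a) :
    Matrix.det (fun i j : Fin (k + 1) => x j ^ a i)
      = x (Fin.last k) ^ a 0 *
        Matrix.det (fun i j : Fin k =>
          x (Fin.castSucc j) ^ a (Fin.castSucc i) *
              x (Fin.last k) ^ (a i.succ - a (Fin.castSucc i))
            - x (Fin.castSucc j) ^ a i.succ) := by
  classical
  set t := x (Fin.last k) with ht
  set g : Fin k → ℕ := fun i => a i.succ - a (Fin.castSucc i) with hg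
  set r : Fin k → ℕ → (Fin k → R) := fun i u =>
    if u = 0 then (fun j => x (Fin.castSucc j) ^ a (Fin.castSucc i) * t ^ g i)
    else (fun j => -(x (Fin.castSucc j) ^ a i.succ)) with hr
  set s : Fin k → ℕ → R := fun i u => if u = 0 then t ^ g i else -1 with hs
  set idx : Fin k → ℕ → Fin (k + 1) := fun i u =>
    if u = 0 then Fin.castSucc i else i.succ with hidx
  set term : (Fin k → ℕ) → R := fun c =>
    (∏ i, s i (c i)) * Matrix.det (fun i j : Fin k => x (Fin.castSucc j) ^ a (idx i (c i)))
    with hterm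
  -- Step 1: rows as two-term sums
  have step1 : (fun i j : Fin k =>
        x (Fin.castSucc j) ^ a (Fin.castSucc i) * t ^ g i - x (Fin.castSucc j) ^ a i.succ)
      = fun i => ∑ u ∈ Finset.range 2, r i u := by
    funext i j
    rw [Finset.sum_apply]
    rw [Finset.sum_range_succ, Finset.sum_range_one]
    simp only [hr, if_pos rfl, if_neg (one_ne_zero)]
    ring
  -- Step 2: multilinear expansion
  have step2 : Matrix.det (fun i j : Fin k =>
        x (Fin.castSucc j) ^ a (Fin.castSucc i) * t ^ g i - x (Fin.castSucc j) ^ a i.succ)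
      = ∑ c ∈ Fintype.piFinset (fun _ : Fin k => Finset.range 2),
          Matrix.det (fun i => r i (c i)) := by
    rw [step1]
    exact (Matrix.detRowAlternating (R := R) (n := Fin k)).toMultilinearMap.map_sum_finset r _
  -- Step 3: pull out scalars
  have pull : ∀ c : Fin k → ℕ, Matrix.det (fun i => r i (c i)) = term c := by
    intro c
    have hmat : (fun i => r i (c i))
        = Matrix.of (fun i j : Fin k =>
            s i (c i) * (x (Fin.castSucc j) ^ a (idx i (c i)))) := by
      funext i j
      by_cases h : c i = 0 <;> simp [hr, hs, hidx, h, mul_comm]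
    rw [hmat]
    exact Matrix.det_mul_column _ _
  -- Step 4: bad terms vanish
  have vanish : ∀ c ∈ Fintype.piFinset (fun _ : Fin k => Finset.range 2),
      term c ≠ 0 → (∀ i j : Fin k, i ≤ j → c i ≤ c j) := by
    intro c hc hne
    by_contra hbad
    have hadj : ¬ (∀ (p : Fin k) (hp : (p : ℕ) + 1 < k), c p ≤ c ⟨(p : ℕ) + 1, hp⟩) :=
      fun h => hbad (mono_of_adj c h)
    push_neg at hadj
    obtain ⟨p, hp, hdesc⟩ := hadj
    have hcp0 : c ⟨(p : ℕ) + 1, hp⟩ = 0 := by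
      have h1 := (Fintype.mem_piFinset.mp hc) ⟨(p : ℕ) + 1, hp⟩
      rw [Finset.mem_range] at h1
      have h2 := (Fintype.mem_piFinset.mp hc) p
      rw [Finset.mem_range] at h2
      omega
    have hcpne : c p ≠ 0 := by omega
    apply hne
    have hpne : p ≠ (⟨(p : ℕ) + 1, hp⟩ : Fin k) := by
      intro h
      have := congrArg Fin.val h
      simp at this
    have hrow : (Matrix.of fun i j : Fin k => x (Fin.castSucc j) ^ a (idx i (c i))) p
        = (Matrix.of fun i j : Fin k => x (Fin.castSucc j) ^ a (idx i (c i)))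
            ⟨(p : ℕ) + 1, hp⟩ := by
      funext j
      show x (Fin.castSucc j) ^ a (idx p (c p))
          = x (Fin.castSucc j) ^ a (idx ⟨(p : ℕ) + 1, hp⟩ (c ⟨(p : ℕ) + 1, hp⟩))
      have h1 : idx p (c p) = p.succ := by simp [hidx, hcpne]
      have h2 : idx ⟨(p : ℕ) + 1, hp⟩ (c ⟨(p : ℕ) + 1, hp⟩)
          = Fin.castSucc ⟨(p : ℕ) + 1, hp⟩ := by simp [hidx, hcp0]
      rw [h1, h2]
      have h3 : p.succ = Fin.castSucc (⟨(p : ℕ) + 1, hp⟩ : Fin k) := Fin.ext (by simp)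
      rw [h3]
    exact mul_eq_zero_of_right _ (Matrix.det_zero_of_row_eq hpne hrow)
  -- telescoping sum of gaps
  have sum_g : ∀ (N : ℕ) (hN : N < k + 1),
      a 0 + ∑ i ∈ Finset.univ.filter (fun i : Fin k => (i : ℕ) < N), g i = a ⟨N, hN⟩ := by
    intro N
    induction N with
    | zero =>
      intro hN
      have hempty : Finset.univ.filter (fun i : Fin k => (i : ℕ) < 0) = ∅ := by
        apply Finset.filter_false_of_mem; intro i _; omega
      rw [hempty, Finset.sum_empty, add_zero]
      exact congrArg a (Fin.ext (by simp))
    | succ N ih =>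
      intro hN1
      have hNk : N < k := by omega
      have hNlt : N < k + 1 := by omega
      have hfilter : Finset.univ.filter (fun i : Fin k => (i : ℕ) < N + 1)
          = insert (⟨N, hNk⟩ : Fin k) (Finset.univ.filter (fun i : Fin k => (i : ℕ) < N)) := by
        ext j
        simp only [Finset.mem_filter, Finset.mem_univ, true_and, Finset.mem_insert, Fin.ext_iff]
        omega
      rw [hfilter, Finset.sum_insert (by simp)]
      have hprev := ih hNlt
      have hgN : g ⟨N, hNk⟩ = a ⟨N + 1, hN1⟩ - a ⟨N, hNlt⟩ := by
        show a (⟨N, hNk⟩ : Fin k).succ - a (Fin.castSucc ⟨N, hNk⟩) = _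
        congr 2 <;> exact Fin.ext rfl
      have hmono : a ⟨N, hNlt⟩ ≤ a ⟨N + 1, hN1⟩ := ha (by simp [Fin.le_def])
      rw [hgN]
      omega
  -- evaluation at the staircase functions
  have eval_cm : ∀ m : Fin (k + 1),
      x (Fin.last k) ^ a 0 * term (fun i => if (i : ℕ) < (m : ℕ) then 0 else 1)
        = (-1) ^ ((m : ℕ) + k) * x (Fin.last k) ^ a m *
            Matrix.det (fun i j : Fin k => x (Fin.castSucc j) ^ a (m.succAbove i)) := by
    intro m
    have hidx_eq : ∀ i : Fin k,
        idx i (if (i : ℕ) < (m : ℕ) then 0 else 1) = m.succAbove i := by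
      intro i
      by_cases h : (i : ℕ) < (m : ℕ)
      · rw [if_pos h]
        have : idx i 0 = Fin.castSucc i := by simp [hidx]
        rw [this]
        exact (Fin.succAbove_of_castSucc_lt m i (by rw [Fin.lt_def]; simpa using h)).symm
      · rw [if_neg h]
        have : idx i 1 = i.succ := by simp [hidx]
        rw [this]
        exact (Fin.succAbove_of_le_castSucc m i (by rw [Fin.le_def]; simp; omega)).symm
    have hprod : (∏ i, s i (if (i : ℕ) < (m : ℕ) then 0 else 1))
        = t ^ (∑ i ∈ Finset.univ.filter (fun i : Fin k => (i : ℕ) < (m : ℕ)), g i) *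
            (-1) ^ (k - (m : ℕ)) := by
      have hsval : ∀ i : Fin k, s i (if (i : ℕ) < (m : ℕ) then 0 else 1)
          = if (i : ℕ) < (m : ℕ) then t ^ g i else -1 := by
        intro i; by_cases h : (i : ℕ) < (m : ℕ) <;> simp [hs, h]
      rw [Finset.prod_congr rfl (fun i _ => hsval i), Finset.prod_ite,
        Finset.prod_pow_eq_pow_sum, Finset.prod_const]
      congr 2
      have h1 := Finset.card_filter_add_card_filter_not
        (s := Finset.univ) (p := fun i : Fin k => (i : ℕ) < (m : ℕ))

      rw [card_filter_lt (m : ℕ) (Fin.is_le m)] at h1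
      simp only [Finset.card_univ, Fintype.card_fin] at h1
      omega
    have hbase : (fun i j : Fin k =>
          x (Fin.castSucc j) ^ a (idx i (if (i : ℕ) < (m : ℕ) then 0 else 1)))
        = (fun i j : Fin k => x (Fin.castSucc j) ^ a (m.succAbove i)) := by
      funext i j; rw [hidx_eq i]
    have hterm_eval : term (fun i => if (i : ℕ) < (m : ℕ) then 0 else 1)
        = (t ^ (∑ i ∈ Finset.univ.filter (fun i : Fin k => (i : ℕ) < (m : ℕ)), g i) *
            (-1) ^ (k - (m : ℕ))) *
          Matrix.det (fun i j : Fin k => x (Fin.castSucc j) ^ a (m.succAbove i)) := by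
      rw [hterm]
      show (∏ i, s i (if (i : ℕ) < (m : ℕ) then 0 else 1)) *
          Matrix.det (fun i j : Fin k =>
            x (Fin.castSucc j) ^ a (idx i (if (i : ℕ) < (m : ℕ) then 0 else 1))) = _
      rw [hprod, hbase]
    rw [hterm_eval]
    have hsum := sum_g (m : ℕ) m.isLt
    have hm : (⟨(m : ℕ), m.isLt⟩ : Fin (k + 1)) = m := Fin.ext rfl
    rw [hm] at hsum
    have hpow : t ^ a 0 * t ^ (∑ i ∈ Finset.univ.filter
          (fun i : Fin k => (i : ℕ) < (m : ℕ)), g i) = t ^ a m := by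
      rw [← pow_add, hsum]
    have hsign : ((-1 : R)) ^ (k - (m : ℕ)) = (-1) ^ ((m : ℕ) + k) := by
      have hmk : (m : ℕ) + k = (k - (m : ℕ)) + 2 * (m : ℕ) := by
        have := Fin.is_le m; omega
      rw [hmk, pow_add, pow_mul, neg_one_sq, one_pow, mul_one]
    calc t ^ a 0 * ((t ^ (∑ i ∈ Finset.univ.filter
            (fun i : Fin k => (i : ℕ) < (m : ℕ)), g i) * (-1) ^ (k - (m : ℕ))) *
          Matrix.det (fun i j : Fin k => x (Fin.castSucc j) ^ a (m.succAbove i)))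
        = (t ^ a 0 * t ^ (∑ i ∈ Finset.univ.filter
            (fun i : Fin k => (i : ℕ) < (m : ℕ)), g i)) * (-1) ^ (k - (m : ℕ)) *
          Matrix.det (fun i j : Fin k => x (Fin.castSucc j) ^ a (m.succAbove i)) := by ring
      _ = _ := by rw [hpow, hsign, ht]; ring
  -- characterize good (monotone 0/1) functions
  have zero_iff : ∀ c : Fin k → ℕ, c ∈ Fintype.piFinset (fun _ : Fin k => Finset.range 2) →
      (∀ i j : Fin k, i ≤ j → c i ≤ c j) →
      ∀ i : Fin k, (c i = 0 ↔ (i : ℕ) < #(Finset.univ.filter fun i : Fin k => c i = 0)) := by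
    intro c hc hgood i
    constructor
    · intro h0
      have hsub : Finset.univ.filter (fun j : Fin k => (j : ℕ) < (i : ℕ) + 1)
          ⊆ Finset.univ.filter (fun j : Fin k => c j = 0) := by
        intro j hj
        simp only [Finset.mem_filter, Finset.mem_univ, true_and] at hj ⊢
        have hji : j ≤ i := by rw [Fin.le_def]; omega
        have := hgood j i hji
        omega
      have hcard := Finset.card_le_card hsub
      rw [card_filter_lt ((i : ℕ) + 1) i.isLt] at hcard
      omega
    · intro hlt
      by_contra h0
      have hsub : Finset.univ.filter (fun j : Fin k => c j = 0)
          ⊆ Finset.univ.filter (fun j : Fin k => (j : ℕ) < (i : ℕ)) := by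
        intro j hj
        simp only [Finset.mem_filter, Finset.mem_univ, true_and] at hj ⊢
        by_contra hge
        have hij : i ≤ j := by rw [Fin.le_def]; omega
        have := hgood i j hij
        omega
      have hcard := Finset.card_le_card hsub
      rw [card_filter_lt (i : ℕ) (le_of_lt i.isLt)] at hcard
      omega
  -- the Laplace expansion
  have laplace := Matrix.det_succ_column (fun i j : Fin (k + 1) => x j ^ a i) (Fin.last k)
  rw [laplace, step2, Finset.mul_sum]
  rw [Finset.sum_congr rfl (fun c _ => congrArg (fun z => x (Fin.last k) ^ a 0 * z) (pull c))]
  -- restrict to good terms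
  rw [← Finset.sum_filter_of_ne (p := fun c => ∀ i j : Fin k, i ≤ j → c i ≤ c j)
    (fun c hc hne => vanish c hc (fun h0 => hne (by
      show x (Fin.last k) ^ a 0 * term c = 0
      rw [h0, mul_zero])))]
  -- bijection with Fin (k+1)
  rw [show ∑ c ∈ (Fintype.piFinset (fun _ : Fin k => Finset.range 2)).filter
        (fun c => ∀ i j : Fin k, i ≤ j → c i ≤ c j),
        x (Fin.last k) ^ a 0 * term c
      = ∑ m : Fin (k + 1),
          x (Fin.last k) ^ a 0 * term (fun i => if (i : ℕ) < (m : ℕ) then 0 else 1) from by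
    apply Finset.sum_bij'
      (i := fun c _ => (⟨#(Finset.univ.filter fun i : Fin k => c i = 0), by
        have := Finset.card_filter_le Finset.univ (fun i : Fin k => c i = 0)
        simp only [Finset.card_univ, Fintype.card_fin] at this
        omega⟩ : Fin (k + 1)))
      (j := fun m _ => (fun i => if (i : ℕ) < (m : ℕ) then 0 else 1 : Fin k → ℕ))
    case hi => intro c hc; exact Finset.mem_univ _
    case hj =>
      intro m _
      refine Finset.mem_filter.mpr ⟨Fintype.mem_piFinset.mpr fun i =>
        Finset.mem_range.mpr (by split <;> omega), ?_⟩
      intro i j hij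
      have hij' := Fin.le_def.mp hij
      show (if (i : ℕ) < (m : ℕ) then (0 : ℕ) else 1) ≤ (if (j : ℕ) < (m : ℕ) then (0 : ℕ) else 1)
      by_cases h1 : (i : ℕ) < (m : ℕ) <;> by_cases h2 : (j : ℕ) < (m : ℕ)
      · rw [if_pos h1, if_pos h2]
      · rw [if_pos h1, if_neg h2]; omega
      · exact absurd hij' (by omega)
      · rw [if_neg h1, if_neg h2]
    case left_neg =>
      intro c hc
      rw [Finset.mem_filter] at hc
      funext i
      have hiff := zero_iff c hc.1 hc.2 i
      have hlt2 := (Fintype.mem_piFinset.mp hc.1) i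
      rw [Finset.mem_range] at hlt2
      show (if (i : ℕ) < #(Finset.univ.filter fun i : Fin k => c i = 0) then 0 else 1) = c i
      by_cases h : (i : ℕ) < #(Finset.univ.filter fun i : Fin k => c i = 0)
      · rw [if_pos h]
        exact (hiff.mpr h).symm
      · rw [if_neg h]
        have : c i ≠ 0 := fun h0 => h (hiff.mp h0)
        omega
    case right_neg =>
      intro m _
      apply Fin.ext
      show #(Finset.univ.filter fun i : Fin k =>
        (if (i : ℕ) < (m : ℕ) then 0 else 1) = 0) = (m : ℕ)
      have hfeq : (Finset.univ.filter fun i : Fin k =>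
          (if (i : ℕ) < (m : ℕ) then (0 : ℕ) else 1) = 0)
          = Finset.univ.filter (fun i : Fin k => (i : ℕ) < (m : ℕ)) := by
        ext i
        simp only [Finset.mem_filter, Finset.mem_univ, true_and]
        split <;> omega
      rw [hfeq, card_filter_lt (m : ℕ) (Fin.is_le m)]
    case h =>
      intro c hc
      rw [Finset.mem_filter] at hc
      have hcm : (fun i : Fin k => if (i : ℕ) <
            #(Finset.univ.filter fun i : Fin k => c i = 0) then (0 : ℕ) else 1) = c := by
        funext i
        have hiff := zero_iff c hc.1 hc.2 i
        have hlt2 := (Fintype.mem_piFinset.mp hc.1) i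
        rw [Finset.mem_range] at hlt2
        by_cases h : (i : ℕ) < #(Finset.univ.filter fun i : Fin k => c i = 0)
        · rw [if_pos h]
          exact (hiff.mpr h).symm
        · rw [if_neg h]
          have : c i ≠ 0 := fun h0 => h (hiff.mp h0)
          omega
      show x (Fin.last k) ^ a 0 * term c
          = x (Fin.last k) ^ a 0 * term (fun i => if (i : ℕ) <
              #(Finset.univ.filter fun i : Fin k => c i = 0) then 0 else 1)
      rw [hcm]]
  -- match term by term
  apply Finset.sum_congr rfl
  intro m _
  rw [eval_cm m]
  have hsub : (fun i j : Fin k => x (Fin.castSucc j) ^ a (m.succAbove i))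
      = Matrix.submatrix (fun i j : Fin (k + 1) => x j ^ a i) m.succAbove
          (Fin.last k).succAbove := by
    funext i j
    show x (Fin.castSucc j) ^ a (m.succAbove i) = x ((Fin.last k).succAbove j) ^ a (m.succAbove i)
    rw [Fin.succAbove_last]
  rw [hsub]
  have hlast : ((Fin.last k : Fin (k + 1)) : ℕ) = k := rfl
  rw [hlast]

lemma det_branch {k : ℕ} (x : Fin (k + 1) → R) (a : Fin (k + 1) → ℕ) (ha : Monotone a) :
    Matrix.det (fun i j : Fin (k + 1) => x j ^ a i)
      = (∏ j : Fin k, (x (Fin.last k) - x (Fin.castSucc j))) *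
        ∑ d ∈ Fintype.piFinset (fun i : Fin k => Finset.range (a i.succ - a (Fin.castSucc i))),
          (x (Fin.last k) ^ a 0 *
            ∏ i : Fin k, x (Fin.last k) ^ (a i.succ - a (Fin.castSucc i) - 1 - d i)) *
          Matrix.det (fun i j : Fin k => x (Fin.castSucc j) ^ (a (Fin.castSucc i) + d i)) := by
  rw [det_expand_last x a ha]
  have hb : Matrix.det (fun i j : Fin k =>
        x (Fin.castSucc j) ^ a (Fin.castSucc i) *
            x (Fin.last k) ^ (a i.succ - a (Fin.castSucc i))
          - x (Fin.castSucc j) ^ a i.succ)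
      = (∏ j : Fin k, (x (Fin.last k) - x (Fin.castSucc j))) *
        ∑ d ∈ Fintype.piFinset (fun i : Fin k => Finset.range (a i.succ - a (Fin.castSucc i))),
          (∏ i : Fin k, x (Fin.last k) ^ (a i.succ - a (Fin.castSucc i) - 1 - d i)) *
            Matrix.det (fun i j : Fin k => x (Fin.castSucc j) ^ (a (Fin.castSucc i) + d i)) :=
    det_rowsum _ _ _ _ (fun i => ha (le_of_lt (Fin.castSucc_lt_succ (i := i))))
  rw [hb, Finset.mul_sum, Finset.mul_sum, Finset.mul_sum]
  apply Finset.sum_congr rfl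
  intro d _
  ring

lemma vprod_split {k : ℕ} (f : Fin (k + 1) → R) :
    (∏ q ∈ Finset.univ.filter (fun q : Fin (k + 1) × Fin (k + 1) => q.1 < q.2),
        (f q.2 - f q.1))
      = (∏ q ∈ Finset.univ.filter (fun q : Fin k × Fin k => q.1 < q.2),
          (f (Fin.castSucc q.2) - f (Fin.castSucc q.1))) *
        ∏ j : Fin k, (f (Fin.last k) - f (Fin.castSucc j)) := by
  classical
  have hset : Finset.univ.filter (fun q : Fin (k + 1) × Fin (k + 1) => q.1 < q.2)
      = ((Finset.univ.filter (fun q : Fin k × Fin k => q.1 < q.2)).image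
          (Prod.map Fin.castSucc Fin.castSucc)) ∪
        (Finset.univ.image (fun j : Fin k => (Fin.castSucc j, Fin.last k))) := by
    ext q
    rw [Finset.mem_filter, Finset.mem_union, Finset.mem_image, Finset.mem_image]
    constructor
    · rintro ⟨-, hij⟩
      by_cases hj : q.2 = Fin.last k
      · right
        have hine : q.1 ≠ Fin.last k := by
          intro h; rw [h, hj] at hij; exact lt_irrefl _ hij
        obtain ⟨i', hi'⟩ := Fin.exists_castSucc_eq.mpr hine
        exact ⟨i', Finset.mem_univ _, by rw [hi', ← hj]⟩
      · left
        obtain ⟨j', hj'⟩ := Fin.exists_castSucc_eq.mpr hj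
        have hine : q.1 ≠ Fin.last k := by
          intro h
          rw [h, ← hj'] at hij
          exact absurd (hij.trans (Fin.castSucc_lt_last j')) (lt_irrefl _)
        obtain ⟨i', hi'⟩ := Fin.exists_castSucc_eq.mpr hine
        refine ⟨(i', j'), Finset.mem_filter.mpr ⟨Finset.mem_univ _, ?_⟩, ?_⟩
        · rw [← Fin.castSucc_lt_castSucc_iff, hi', hj']
          exact hij
        · show (Fin.castSucc i', Fin.castSucc j') = q
          rw [hi', hj']
    · intro hq
      refine ⟨Finset.mem_univ _, ?_⟩
      rcases hq with ⟨p, hp, hpe⟩ | ⟨j', -, hpe⟩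
      · rw [Finset.mem_filter] at hp
        rw [← hpe]
        show Fin.castSucc p.1 < Fin.castSucc p.2
        exact Fin.castSucc_lt_castSucc_iff.mpr hp.2
      · rw [← hpe]
        exact Fin.castSucc_lt_last j'
  have hdisj : Disjoint
      ((Finset.univ.filter (fun q : Fin k × Fin k => q.1 < q.2)).image
          (Prod.map Fin.castSucc Fin.castSucc))
      (Finset.univ.image (fun j : Fin k => (Fin.castSucc j, Fin.last k))) := by
    rw [Finset.disjoint_left]
    rintro q hqA hqB
    rw [Finset.mem_image] at hqA hqB
    obtain ⟨p, -, hp⟩ := hqA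
    obtain ⟨j', -, hj'⟩ := hqB
    have h1 : q.2 = Fin.castSucc p.2 := by rw [← hp]; rfl
    have h2 : q.2 = Fin.last k := by rw [← hj']
    exact absurd (h1.symm.trans h2) (Fin.castSucc_lt_last p.2).ne
  rw [hset, Finset.prod_union hdisj, Finset.prod_image, Finset.prod_image]
  · apply congrArg₂ (· * ·)
    · exact Finset.prod_congr rfl (fun q _ => rfl)
    · exact Finset.prod_congr rfl (fun q _ => rfl)
  · intro u _ v _ h
    have h1 := congrArg Prod.fst h
    simp only at h1
    exact Fin.castSucc_injective _ h1
  · intro u _ v _ h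
    have h1 := congrArg Prod.fst h
    have h2 := congrArg Prod.snd h
    simp only [Prod.map] at h1 h2
    exact Prod.ext (Fin.castSucc_injective _ h1) (Fin.castSucc_injective _ h2)

open MvPolynomial

lemma nn_mul {σ : Type*} {p q : MvPolynomial σ ℤ} (hp : ∀ μ, 0 ≤ p.coeff μ)
    (hq : ∀ μ, 0 ≤ q.coeff μ) : ∀ μ, 0 ≤ (p * q).coeff μ := by
  intro μ
  classical
  rw [MvPolynomial.coeff_mul]
  exact Finset.sum_nonneg (fun z _ => mul_nonneg (hp _) (hq _))

lemma nn_sum {σ ι : Type*} (s : Finset ι) (f : ι → MvPolynomial σ ℤ)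
    (h : ∀ i ∈ s, ∀ μ, 0 ≤ (f i).coeff μ) : ∀ μ, 0 ≤ (∑ i ∈ s, f i).coeff μ := by
  intro μ
  rw [MvPolynomial.coeff_sum]
  exact Finset.sum_nonneg (fun i hi => h i hi μ)

lemma nn_prod {σ ι : Type*} (s : Finset ι) (f : ι → MvPolynomial σ ℤ)
    (h : ∀ i ∈ s, ∀ μ, 0 ≤ (f i).coeff μ) : ∀ μ, 0 ≤ (∏ i ∈ s, f i).coeff μ := by
  classical
  refine Finset.prod_induction f (fun p => ∀ μ, 0 ≤ p.coeff μ)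
    (fun p q hp hq => nn_mul hp hq) ?_ h
  intro μ
  rw [MvPolynomial.coeff_one]
  split <;> norm_num

lemma nn_X_pow {σ : Type*} [DecidableEq σ] (i : σ) (n : ℕ) :
    ∀ μ, 0 ≤ ((X i : MvPolynomial σ ℤ) ^ n).coeff μ := by
  intro μ
  rw [MvPolynomial.coeff_X_pow]
  split <;> norm_num

lemma nn_rename {σ τ : Type*} (f : σ → τ) (hf : Function.Injective f)
    (p : MvPolynomial σ ℤ) (hp : ∀ μ, 0 ≤ p.coeff μ) :
    ∀ μ, 0 ≤ (rename f p).coeff μ := by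
  intro μ
  by_cases h : (rename f p).coeff μ = 0
  · rw [h]
  · obtain ⟨d, hd, -⟩ := MvPolynomial.coeff_rename_ne_zero f p μ h
    rw [← hd, MvPolynomial.coeff_rename_mapDomain f hf]
    exact hp d

theorem schur_aux : ∀ (k : ℕ) (a : Fin k → ℕ), Monotone a →
    ∃ s : MvPolynomial (Fin k) ℤ,
      Matrix.det (fun i j : Fin k => (X j : MvPolynomial (Fin k) ℤ) ^ a i)
        = (∏ q ∈ Finset.univ.filter (fun q : Fin k × Fin k => q.1 < q.2),
            (X q.2 - X q.1)) * s
      ∧ ∀ μ : Fin k →₀ ℕ, 0 ≤ s.coeff μ := by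
  intro k
  induction k with
  | zero =>
    intro a ha
    refine ⟨1, ?_, ?_⟩
    · have h1 : Matrix.det (fun i j : Fin 0 => (X j : MvPolynomial (Fin 0) ℤ) ^ a i) = 1 :=
        Matrix.det_fin_zero
      have h2 : (Finset.univ.filter (fun q : Fin 0 × Fin 0 => q.1 < q.2)) = ∅ := by
        ext q; exact q.1.elim0
      rw [h1, h2, Finset.prod_empty, one_mul]
    · intro μ
      rw [MvPolynomial.coeff_one]
      split <;> norm_num
  | succ k ih =>
    intro a ha
    classical
    -- renamed Vandermonde product
    have hren : (rename (Fin.castSucc) : MvPolynomial (Fin k) ℤ →ₐ[ℤ] MvPolynomial (Fin (k + 1)) ℤ)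
        (∏ q ∈ Finset.univ.filter (fun q : Fin k × Fin k => q.1 < q.2), (X q.2 - X q.1))
        = ∏ q ∈ Finset.univ.filter (fun q : Fin k × Fin k => q.1 < q.2),
            ((X (Fin.castSucc q.2) : MvPolynomial (Fin (k + 1)) ℤ) - X (Fin.castSucc q.1)) := by
      rw [map_prod]
      exact Finset.prod_congr rfl (fun q _ => by rw [map_sub, rename_X, rename_X])
    -- per-summand decomposition from the inductive hypothesis
    have key : ∀ d : Fin k → ℕ, ∃ sd : MvPolynomial (Fin k) ℤ,
        (d ∈ Fintype.piFinset (fun i : Fin k =>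
            Finset.range (a i.succ - a (Fin.castSucc i))) →
          Matrix.det (fun i j : Fin k =>
              (X (Fin.castSucc j) : MvPolynomial (Fin (k + 1)) ℤ) ^ (a (Fin.castSucc i) + d i))
            = (∏ q ∈ Finset.univ.filter (fun q : Fin k × Fin k => q.1 < q.2),
                ((X (Fin.castSucc q.2) : MvPolynomial (Fin (k + 1)) ℤ) - X (Fin.castSucc q.1))) *
              rename Fin.castSucc sd)
        ∧ ∀ μ, 0 ≤ sd.coeff μ := by
      intro d
      by_cases hd : d ∈ Fintype.piFinset (fun i : Fin k =>
          Finset.range (a i.succ - a (Fin.castSucc i)))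
      · have hbmono : Monotone (fun i : Fin k => a (Fin.castSucc i) + d i) := by
          have hadj : ∀ (r : Fin k) (hr : (r : ℕ) + 1 < k),
              a (Fin.castSucc r) + d r ≤ a (Fin.castSucc ⟨(r : ℕ) + 1, hr⟩) + d ⟨(r : ℕ) + 1, hr⟩ := by
            intro r hr
            have hd2 := Fintype.mem_piFinset.mp hd r
            rw [Finset.mem_range] at hd2
            have hle := ha (le_of_lt (Fin.castSucc_lt_succ (i := r)))
            have hcs : Fin.castSucc (⟨(r : ℕ) + 1, hr⟩ : Fin k) = r.succ := Fin.ext rfl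
            rw [hcs]
            have h1 : a (Fin.castSucc r) + d r < a r.succ := by omega
            omega
          exact fun i j hij => mono_of_adj _ hadj i j hij
        obtain ⟨sd, hsd, hnn⟩ := ih (fun i : Fin k => a (Fin.castSucc i) + d i) hbmono
        refine ⟨sd, fun _ => ?_, hnn⟩
        have h2 := congrArg
          (rename (Fin.castSucc) : MvPolynomial (Fin k) ℤ →ₐ[ℤ] MvPolynomial (Fin (k + 1)) ℤ)
          hsd
        rw [map_mul, hren] at h2
        replace h2 := (AlgHom.map_det (rename (Fin.castSucc) : MvPolynomial (Fin k) ℤ →ₐ[ℤ] MvPolynomial (Fin (k + 1)) ℤ) (fun i j : Fin k => (X j : MvPolynomial (Fin k) ℤ) ^ (a (Fin.castSucc i) + d i) : Matrix (Fin k) (Fin k) (MvPolynomial (Fin k) ℤ))).symm.trans h2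
        have hmat : (fun i j : Fin k =>
              (X (Fin.castSucc j) : MvPolynomial (Fin (k + 1)) ℤ) ^ (a (Fin.castSucc i) + d i))
            = ((rename (Fin.castSucc) :
                MvPolynomial (Fin k) ℤ →ₐ[ℤ] MvPolynomial (Fin (k + 1)) ℤ).mapMatrix
                (fun i j : Fin k =>
                  (X j : MvPolynomial (Fin k) ℤ) ^ (a (Fin.castSucc i) + d i)) :
                Matrix (Fin k) (Fin k) (MvPolynomial (Fin (k + 1)) ℤ)) := by
          funext i j
          show _ = (rename (Fin.castSucc))
              ((X j : MvPolynomial (Fin k) ℤ) ^ (a (Fin.castSucc i) + d i))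
          rw [map_pow, rename_X]
        exact (congrArg Matrix.det hmat).trans h2
      · exact ⟨0, fun h => absurd h hd, fun μ => by simp⟩
    choose sd hsd hnn using key
    refine ⟨∑ d ∈ Fintype.piFinset (fun i : Fin k =>
        Finset.range (a i.succ - a (Fin.castSucc i))),
        ((X (Fin.last k) : MvPolynomial (Fin (k + 1)) ℤ) ^ a 0 *
          ∏ i : Fin k, (X (Fin.last k) : MvPolynomial (Fin (k + 1)) ℤ) ^
            (a i.succ - a (Fin.castSucc i) - 1 - d i)) * rename Fin.castSucc (sd d), ?_, ?_⟩
    · rw [det_branch X a ha]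
      rw [Finset.sum_congr rfl (fun d hd => congrArg
        (fun z => ((X (Fin.last k) : MvPolynomial (Fin (k + 1)) ℤ) ^ a 0 *
          ∏ i : Fin k, (X (Fin.last k) : MvPolynomial (Fin (k + 1)) ℤ) ^
            (a i.succ - a (Fin.castSucc i) - 1 - d i)) * z) (hsd d hd))]
      rw [vprod_split (R := MvPolynomial (Fin (k + 1)) ℤ) (f := X), ← hren]
      rw [Finset.mul_sum, Finset.mul_sum]
      exact Finset.sum_congr rfl (fun d _ => by ring)
    · apply nn_sum
      intro d _
      apply nn_mul
      · apply nn_mul (nn_X_pow _ _)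
        exact nn_prod _ _ (fun i _ => nn_X_pow _ _)
      · exact nn_rename _ (Fin.castSucc_injective _) _ (hnn d)

/-- The Schur polynomial `s_A` associated to a strictly increasing index set
`A = {a 0 < a 1 < ... < a (k-1)} ⊆ {0,...,n-1}`, characterized by
`det ((x j)^(a i)) = ∏_{i<j} (x j - x i) * s_A`, has nonnegative (integer)
coefficients. -/
theorem schur_polynomial_nonneg_coeffs
    (n k : ℕ) (a : Fin k → ℕ) (ha : StrictMono a) (han : ∀ i, a i < n) :
    ∃ s : MvPolynomial (Fin k) ℤ,
      Matrix.det (fun i j : Fin k => (X j : MvPolynomial (Fin k) ℤ) ^ a i)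
        = (∏ q ∈ Finset.univ.filter (fun q : Fin k × Fin k => q.1 < q.2),
            (X q.2 - X q.1)) * s
      ∧ ∀ μ : Fin k →₀ ℕ, 0 ≤ s.coeff μ :=
  schur_aux k a ha.monotone
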